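/- For every prime p with p ≡ 1 (mod 4), there are infinitely many positive integers n such that n² − p > 0 and λ(n² − p) = −1. -/

import Mathlib

/-- The Liouville function: `λ(n) = (-1)^Ω(n)` where `Ω(n)` counts prime factors
of `n` with multiplicity. -/
def liouvilleFun (n : ℕ) : ℤ := (-1) ^ n.primeFactorsList.length

lemma liouvilleFun_mul {a b : ℕ} (ha : a ≠ 0) (hb : b ≠ 0) :
    liouvilleFun (a * b) = liouvilleFun a * liouvilleFun b := by
  unfold liouvilleFun
  rw [← ArithmeticFunction.cardFactors_apply, ← ArithmeticFunction.cardFactors_apply,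
    ← ArithmeticFunction.cardFactors_apply, ArithmeticFunction.cardFactors_mul ha hb, pow_add]

lemma liouvilleFun_sq (a : ℕ) (ha : a ≠ 0) : liouvilleFun (a ^ 2) = 1 := by
  rw [sq, liouvilleFun_mul ha ha]
  unfold liouvilleFun
  rw [← pow_add]
  exact Even.neg_one_pow ⟨_, rfl⟩

lemma liouvilleFun_prime {p : ℕ} (hp : p.Prime) : liouvilleFun p = -1 := by
  unfold liouvilleFun
  rw [← ArithmeticFunction.cardFactors_apply, ArithmeticFunction.cardFactors_apply_prime hp,
    pow_one]

lemma liouvilleFun_eq_or (n : ℕ) : liouvilleFun n = 1 ∨ liouvilleFun n = -1 := by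
  unfold liouvilleFun
  rcases Nat.even_or_odd (n.primeFactorsList.length) with h | h
  · exact Or.inl (Even.neg_one_pow h)
  · exact Or.inr (Odd.neg_one_pow h)

/-- From a coprime product being a square in ℕ, each factor is a square. -/
lemma nat_sq_of_coprime {u v w : ℕ} (h : Nat.Coprime u v) (he : u * v = w ^ 2) :
    ∃ a, u = a ^ 2 := by
  have hz : (u : ℤ) * v = (w : ℤ) ^ 2 := by exact_mod_cast he
  obtain ⟨a0, ha | ha⟩ := Int.sq_of_gcd_eq_one (by exact h) hz
  · refine ⟨a0.natAbs, ?_⟩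
    have h2 : ((a0.natAbs : ℤ)) ^ 2 = a0 ^ 2 := by rw [Int.natCast_natAbs, sq_abs]
    exact_mod_cast ha.trans h2.symm
  · have h1 : (u : ℤ) ≤ 0 := ha ▸ neg_nonpos.mpr (sq_nonneg a0)
    have hu0 : u = 0 := by exact_mod_cast le_antisymm h1 (Int.natCast_nonneg u)
    exact ⟨0, by simp [hu0]⟩

/-- Descent: from any solution of `x² = 1 + p y²` with `y > 0` and `p ≡ 1 [MOD 4]` prime,
we obtain a solution of the negative Pell equation `a² + 1 = p b²`. -/
lemma negPell_descent (p : ℕ) (hp : p.Prime) (hp4 : p % 4 = 1) :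
    ∀ y : ℕ, 0 < y → ∀ x : ℕ, x ^ 2 = 1 + p * y ^ 2 →
      ∃ a b : ℕ, 0 < b ∧ a ^ 2 + 1 = p * b ^ 2 := by
  intro y
  induction y using Nat.strong_induction_on with
  | _ y ih =>
  intro hy x hx
  have hp5 : 5 ≤ p := by have := hp.two_le; omega
  have hy2 : 1 ≤ y ^ 2 := Nat.one_le_iff_ne_zero.mpr (pow_ne_zero 2 (by omega))
  have hpy : 5 * 1 ≤ p * y ^ 2 := Nat.mul_le_mul hp5 hy2
  have hx6 : 6 ≤ x ^ 2 := by omega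
  have hx3 : 3 ≤ x := by
    by_contra hc
    have := Nat.pow_le_pow_left (show x ≤ 2 by omega) 2
    omega
  -- x is odd
  have hxodd : x % 2 = 1 := by
    by_contra hodd
    obtain ⟨t, ht⟩ : ∃ t, x = 2 * t := ⟨x / 2, by omega⟩
    have hx4 : x ^ 2 = 4 * t ^ 2 := by rw [ht]; ring
    rcases Nat.even_or_odd y with ⟨s, hs⟩ | ⟨s, hs⟩
    · have hy4 : y ^ 2 = 4 * s ^ 2 := by rw [hs]; ring
      have h2 : p * y ^ 2 = 4 * (p * s ^ 2) := by rw [hy4]; ring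
      omega
    · have hy4 : y ^ 2 = 4 * (s ^ 2 + s) + 1 := by rw [hs]; ring
      have h2 : p * y ^ 2 = 4 * (p * (s ^ 2 + s)) + p := by rw [hy4]; ring
      omega
  -- y is even
  have hyeven : y % 2 = 0 := by
    by_contra hodd
    obtain ⟨s, hs⟩ : ∃ s, y = 2 * s + 1 := ⟨y / 2, by omega⟩
    obtain ⟨t, ht⟩ : ∃ t, x = 2 * t + 1 := ⟨x / 2, by omega⟩
    have h1 : x ^ 2 = 4 * (t ^ 2 + t) + 1 := by rw [ht]; ring
    have hy4 : y ^ 2 = 4 * (s ^ 2 + s) + 1 := by rw [hs]; ring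
    have h2 : p * y ^ 2 = 4 * (p * (s ^ 2 + s)) + p := by rw [hy4]; ring
    omega
  obtain ⟨t, ht⟩ : ∃ t, x = 2 * t + 1 := ⟨x / 2, by omega⟩
  obtain ⟨w, hw⟩ : ∃ w, y = 2 * w := ⟨y / 2, by omega⟩
  have hw0 : 0 < w := by omega
  -- u = t, v = t+1, u*v = p*w²
  have h1 : x ^ 2 = 4 * (t * (t + 1)) + 1 := by rw [ht]; ring
  have h2 : p * y ^ 2 = 4 * (p * w ^ 2) := by rw [hw]; ring
  have huv : t * (t + 1) = p * w ^ 2 := by omega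
  have ht0 : 0 < t := by nlinarith
  have hcop : Nat.Coprime t (t + 1) := by
    have h := Nat.dvd_sub (Nat.gcd_dvd_right t (t + 1)) (Nat.gcd_dvd_left t (t + 1))
    simp only [Nat.add_sub_cancel_left] at h
    exact Nat.dvd_one.mp h
  have hpdvd : p ∣ t * (t + 1) := ⟨w ^ 2, huv⟩
  rcases (Nat.Prime.dvd_mul hp).mp hpdvd with hpu | hpv
  · -- t = p * u', smaller solution, recurse
    obtain ⟨u', hu'⟩ := hpu
    have huv' : u' * (t + 1) = w ^ 2 := by
      have h3 : p * (u' * (t + 1)) = p * w ^ 2 := by rw [← huv, hu']; ring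
      exact Nat.eq_of_mul_eq_mul_left (by omega) h3
    have hdvd : u' ∣ t := ⟨p, by rw [hu']; ring⟩
    have hcop' : Nat.Coprime u' (t + 1) := Nat.Coprime.coprime_dvd_left hdvd hcop
    obtain ⟨a, ha⟩ := nat_sq_of_coprime hcop' huv'
    obtain ⟨b, hb⟩ := nat_sq_of_coprime hcop'.symm (by rw [mul_comm]; exact huv')
    -- b² = t+1 = p a² + 1, new solution (b, a) with a < y
    have htpa : t = p * a ^ 2 := by rw [hu', ha]
    have hb2 : b ^ 2 = 1 + p * a ^ 2 := by omega
    have ha0 : 0 < a := by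
      rcases Nat.eq_zero_or_pos a with h0 | h0
      · exfalso
        rw [h0] at htpa
        have hz : p * 0 ^ 2 = 0 := by ring
        omega
      · exact h0
    have habw : (a * b) ^ 2 = w ^ 2 := by rw [mul_pow, ← ha, ← hb]; exact huv'
    have habw' : a * b = w := Nat.pow_left_injective (by norm_num) habw
    have hb1 : 1 ≤ b := by
      rcases Nat.eq_zero_or_pos b with h0 | h0
      · exfalso
        rw [h0] at hb
        have hz : (0 : ℕ) ^ 2 = 0 := by ring
        omega
      · exact h0
    have haw : a < y := by
      have : a ≤ a * b := Nat.le_mul_of_pos_right a hb1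
      omega
    exact ih a haw ha0 b hb2
  · -- t + 1 = p * v', negative Pell solution
    obtain ⟨v', hv'⟩ := hpv
    have huv' : t * v' = w ^ 2 := by
      have h3 : p * (t * v') = p * w ^ 2 := by rw [← huv, hv']; ring
      exact Nat.eq_of_mul_eq_mul_left (by omega) h3
    have hdvd : v' ∣ t + 1 := ⟨p, by rw [hv']; ring⟩
    have hcop' : Nat.Coprime t v' := Nat.Coprime.coprime_dvd_right hdvd hcop
    obtain ⟨a, ha⟩ := nat_sq_of_coprime hcop' huv'
    obtain ⟨b, hb⟩ := nat_sq_of_coprime hcop'.symm (by rw [mul_comm]; exact huv')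
    have htpb : t + 1 = p * b ^ 2 := by rw [hv', hb]
    refine ⟨a, b, ?_, by omega⟩
    rcases Nat.eq_zero_or_pos b with h0 | h0
    · exfalso
      rw [h0] at htpb
      have hz : p * 0 ^ 2 = 0 := by ring
      omega
    · exact h0

/-- Existence of a negative Pell solution for primes `p ≡ 1 [MOD 4]`. -/
lemma negPell_exists (p : ℕ) (hp : p.Prime) (hp4 : p % 4 = 1) :
    ∃ a b : ℕ, 0 < b ∧ a ^ 2 + 1 = p * b ^ 2 := by
  have hd0 : (0 : ℤ) < p := by exact_mod_cast hp.pos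
  have hdsq : ¬IsSquare (p : ℤ) := (Nat.prime_iff_prime_int.mp hp).not_isSquare
  obtain ⟨x, y, hxy, hy⟩ := Pell.exists_of_not_isSquare hd0 hdsq
  have hy' : 0 < y.natAbs := Int.natAbs_pos.mpr hy
  refine negPell_descent p hp hp4 y.natAbs hy' x.natAbs ?_
  have h1 : ((x.natAbs : ℤ)) ^ 2 = x ^ 2 := by rw [Int.natCast_natAbs, sq_abs]
  have h2 : ((y.natAbs : ℤ)) ^ 2 = y ^ 2 := by rw [Int.natCast_natAbs, sq_abs]
  have h3 : ((x.natAbs : ℤ)) ^ 2 = 1 + (p : ℤ) * ((y.natAbs : ℤ)) ^ 2 := by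
    rw [h1, h2]; linarith [hxy]
  exact_mod_cast h3

theorem liouville_neg_infinitely_often_sq_sub_prime (p : ℕ) (hp : p.Prime)
    (hp4 : p % 4 = 1) :
    {n : ℕ | 0 < n ∧ p < n ^ 2 ∧ liouvilleFun (n ^ 2 - p) = -1}.Infinite := by
  set S := {n : ℕ | 0 < n ∧ p < n ^ 2 ∧ liouvilleFun (n ^ 2 - p) = -1} with hS
  have hp5 : 5 ≤ p := by have := hp.two_le; omega
  -- one element of S from the negative Pell equation
  obtain ⟨a, b, hb0, hab⟩ := negPell_exists p hp hp4
  have hb2 : 1 ≤ b ^ 2 := Nat.one_le_iff_ne_zero.mpr (pow_ne_zero 2 (by omega))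
  have hpb2 : 5 * 1 ≤ p * b ^ 2 := Nat.mul_le_mul hp5 hb2
  have ha0 : 0 < a := by
    rcases Nat.eq_zero_or_pos a with h0 | h0
    · exfalso
      rw [h0] at hab
      have hz : (0 : ℕ) ^ 2 = 0 := by ring
      omega
    · exact h0
  have hmem : p * b ∈ S := by
    have h3 : (p * b) ^ 2 = p * a ^ 2 + p := by
      rw [show (p * b) ^ 2 = p * (p * b ^ 2) by ring, ← hab]; ring
    have h1 : (p * b) ^ 2 - p = p * a ^ 2 := by omega
    have hpa : 1 ≤ p * a ^ 2 := by
      have : 1 * 1 ≤ p * a ^ 2 :=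
        Nat.mul_le_mul (by omega) (Nat.one_le_iff_ne_zero.mpr (pow_ne_zero 2 (by omega)))
      omega
    refine ⟨Nat.mul_pos (by omega) hb0, by omega, ?_⟩
    rw [h1, liouvilleFun_mul (by omega) (pow_ne_zero 2 (by omega)), liouvilleFun_prime hp,
      liouvilleFun_sq a (by omega)]
    ring
  -- step: every element of S has a strictly larger element of S
  have hstep : ∀ n ∈ S, ∃ m ∈ S, n < m := by
    rintro n ⟨hn0, hnp, hnl⟩
    set k := n ^ 2 - p with hk
    have hk0 : 0 < k := by omega
    have hn2 : n ^ 2 = p + k := by omega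
    have e0 : (n + 1) ^ 2 = n ^ 2 + 2 * n + 1 := by ring
    have hsucc : p < (n + 1) ^ 2 := by omega
    rcases liouvilleFun_eq_or ((n + 1) ^ 2 - p) with h1 | h1
    · -- use m = n + k with the identity (n+k)² - p = k * ((n+1)² - p)
      have e1 : (n + 1) ^ 2 - p = k + 2 * n + 1 := by omega
      have e2 : (n + k) ^ 2 = n ^ 2 + 2 * (n * k) + k ^ 2 := by ring
      have hk2 : 1 ≤ k ^ 2 := Nat.one_le_iff_ne_zero.mpr (pow_ne_zero 2 (by omega))
      have e3 : (n + k) ^ 2 - p = k + 2 * (n * k) + k ^ 2 := by omega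
      refine ⟨n + k, ⟨by omega, by omega, ?_⟩, by omega⟩
      have e4 : (n + k) ^ 2 - p = k * ((n + 1) ^ 2 - p) := by rw [e3, e1]; ring
      rw [e4, liouvilleFun_mul (by omega) (by omega), hnl, h1]
      ring
    · exact ⟨n + 1, ⟨by omega, hsucc, h1⟩, by omega⟩
  -- conclude infinitude
  apply Set.infinite_of_not_bddAbove
  rw [not_bddAbove_iff]
  intro N
  have key : ∀ M : ℕ, ∃ n ∈ S, M < n := by
    intro M
    induction M with
    | zero =>
        obtain ⟨m, hm, hlt⟩ := hstep _ hmem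
        exact ⟨m, hm, by have := hm.1; omega⟩
    | succ M ihM =>
        obtain ⟨n, hn, hMn⟩ := ihM
        rcases Nat.lt_or_ge (M + 1) n with h | h
        · exact ⟨n, hn, h⟩
        · obtain ⟨m, hm, hnm⟩ := hstep _ hn
          exact ⟨m, hm, by omega⟩
  obtain ⟨n, hn, hlt⟩ := key N
  exact ⟨n, hn, hlt⟩
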